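/- Let H be a real Hilbert space, φ ∈ Γ₀(H), x, u* ∈ H, γ > 0. Then φ(x) + φ*(u*) − ⟨x,u*⟩ ≥ ‖x − prox_{γφ}(x + γu*)‖²/γ, where prox_{γφ} = (Id + γ∂φ)^{-1}. -/

import Mathlib

open scoped Topology RealInnerProductSpace

variable {H : Type*} [NormedAddCommGroup H] [InnerProductSpace ℝ H] [CompleteSpace H]

/-- The Haraux function of a set-valued operator on a real Hilbert space. -/
noncomputable def harauxH (A : H → Set H) (x u : H) : EReal :=
  ⨆ (p : H × H) (_ : p.2 ∈ A p.1), ((⟪x - p.1, p.2 - u⟫ : ℝ) : EReal)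

/-- Monotonicity on a real Hilbert space. -/
def IsMonotoneH (A : H → Set H) : Prop :=
  ∀ ⦃x x' y y'⦄, x' ∈ A x → y' ∈ A y → (0 : ℝ) ≤ ⟪x - y, x' - y'⟫

/-- Maximal monotonicity on a real Hilbert space. -/
def IsMaxMonotoneH (A : H → Set H) : Prop :=
  IsMonotoneH A ∧
    ∀ ⦃x x'⦄, (∀ ⦃y y'⦄, y' ∈ A y → (0 : ℝ) ≤ ⟪x - y, x' - y'⟫) → x' ∈ A x

/-- The Fenchel conjugate on a real Hilbert space. -/
noncomputable def fconjH (f : H → EReal) (u : H) : EReal :=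
  ⨆ y : H, (((⟪y, u⟫ : ℝ) : EReal) - f y)

/-- The convex subdifferential on a real Hilbert space. -/
def subdiffH (f : H → EReal) (x : H) : Set H :=
  {xs | ∀ y : H, ((⟪y - x, xs⟫ : ℝ) : EReal) + f x ≤ f y}

/-- Carlier's inequality for functions: for `φ ∈ Γ₀(H)`,
`φ(x) + φ*(u*) − ⟨x,u*⟩ ≥ ‖x − prox_{γφ}(x + γu*)‖²/γ`, where
`prox_{γφ} = (Id + γ∂φ)⁻¹`. -/
theorem fenchelYoung_ge_prox_bound
    (φ : H → EReal)
    (hproper : (∃ w, φ w ≠ ⊤) ∧ ∀ w, φ w ≠ ⊥)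
    (hlsc : LowerSemicontinuous φ)
    (hconv : ∀ (w v : H) (a b : ℝ), 0 ≤ a → 0 ≤ b → a + b = 1 →
      φ (a • w + b • v) ≤ (a : EReal) * φ w + (b : EReal) * φ v)
    (γ : ℝ) (hγ : 0 < γ)
    (P : H → H) (hP : ∀ w : H, ∃ a ∈ subdiffH φ (P w), w = P w + γ • a)
    (x u : H) :
    ((‖x - P (x + γ • u)‖ ^ 2 / γ : ℝ) : EReal)
      ≤ φ x + fconjH φ u - ((⟪x, u⟫ : ℝ) : EReal) := by
  obtain ⟨a, ha, heq⟩ := hP (x + γ • u)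
  set p := P (x + γ • u) with hp
  have hxp : x - p = γ • (a - u) := by
    rw [smul_sub]
    linear_combination (norm := module) heq
  -- key scalar identity
  have hinner : ⟪x - p, a⟫ + ⟪p, u⟫ - ⟪x, u⟫ = ‖x - p‖ ^ 2 / γ := by
    have h1 : ⟪x - p, a⟫ + ⟪p, u⟫ - ⟪x, u⟫ = ⟪x - p, a - u⟫ := by
      simp only [inner_sub_right, inner_sub_left]; ring
    rw [h1, hxp]
    rw [real_inner_smul_left, real_inner_self_eq_norm_sq, norm_smul]
    simp [abs_of_pos hγ, mul_pow]
    field_simp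
  -- φ p is real
  have hφp_ne_bot := hproper.2 p
  have hφp_ne_top : φ p ≠ ⊤ := by
    intro htop
    obtain ⟨w, hw⟩ := hproper.1
    have := ha w
    rw [htop, EReal.add_top_of_ne_bot (EReal.coe_ne_bot _)] at this
    exact hw (top_le_iff.mp this)
  obtain ⟨r, hr⟩ : ∃ r : ℝ, φ p = (r : EReal) := by
    lift φ p to ℝ using ⟨hφp_ne_top, hφp_ne_bot⟩ with r
    exact ⟨r, rfl⟩
  have h1 : ((⟪x - p, a⟫ : ℝ) : EReal) + (r : EReal) ≤ φ x := by
    rw [← hr]; exact ha x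
  have h2 : ((⟪p, u⟫ - r : ℝ) : EReal) ≤ fconjH φ u := by
    have := le_iSup (fun y => ((⟪y, u⟫ : ℝ) : EReal) - φ y) p
    rw [hr] at this
    exact_mod_cast this
  have hφx_ne_bot := hproper.2 x
  have hcu_ne_bot : fconjH φ u ≠ ⊥ := fun hb =>
    EReal.coe_ne_bot _ (le_bot_iff.mp (hb ▸ h2))
  by_cases hx : φ x = ⊤
  · rw [hx, EReal.top_add_of_ne_bot hcu_ne_bot]
    rw [EReal.top_sub_coe]
    exact le_top
  by_cases hcu : fconjH φ u = ⊤
  · rw [hcu, EReal.add_top_of_ne_bot hφx_ne_bot, EReal.top_sub_coe]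
    exact le_top
  obtain ⟨s, hs⟩ : ∃ s : ℝ, φ x = (s : EReal) := by
    lift φ x to ℝ using ⟨hx, hφx_ne_bot⟩ with s; exact ⟨s, rfl⟩
  obtain ⟨t, ht⟩ : ∃ t : ℝ, fconjH φ u = (t : EReal) := by
    lift fconjH φ u to ℝ using ⟨hcu, hcu_ne_bot⟩ with t; exact ⟨t, rfl⟩
  rw [hs, ht]
  rw [hs] at h1; rw [ht] at h2
  have h1' : ⟪x - p, a⟫ + r ≤ s := by exact_mod_cast h1
  have h2' : ⟪p, u⟫ - r ≤ t := by exact_mod_cast h2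
  have : ‖x - p‖ ^ 2 / γ ≤ s + t - ⟪x, u⟫ := by
    rw [← hinner]; linarith
  exact_mod_cast this
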